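/- For every τ ∈ ℍ: 7·E₆(τ) = 2·E₂(τ)·E₄(τ) + πi·δ₄E₄(τ), where δ₄E₄ = ∂_τE₄ + (4/(τ−τ̄))·E₄. -/

import Mathlib

noncomputable section
open Complex Real ComplexConjugate

/-- the divisor power sum `σ_k(n) = Σ_{d∣n} d^k`, as a complex number -/
def sigmaC (k n : ℕ) : ℂ := ∑ d ∈ n.divisors, (d : ℂ) ^ k

/-- the holomorphic part of the weight-two Eisenstein series,
`2(2πi)²·(−1/24 + Σ_{n≥1} σ₁(n)qⁿ)` -/
def E2hol (τ : ℂ) : ℂ :=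
  2 * (2 * π * I) ^ 2 *
    (-(1 / 24) + ∑' n : ℕ, sigmaC 1 (n + 1) * Complex.exp (2 * π * I * τ) ^ (n + 1))

/-- the level-one Eisenstein series: for even `k ≥ 4`,
`E_k(τ) = (2(2πi)^k/(k−1)!)·(−B_k/(2k) + Σ_{n≥1} σ_{k−1}(n)qⁿ)`;
`E_k = 0` for odd `k`; and the non-holomorphic
`E₂(τ) = 2(2πi)²·(−1/(4πi(τ−τ̄)) − 1/24 + Σ_{n≥1} σ₁(n)qⁿ)`. -/
def Eis (k : ℕ) (τ : ℂ) : ℂ :=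
  if k = 2 then
    E2hol τ + 2 * (2 * π * I) ^ 2 * (-(1 / (4 * π * I * (τ - conj τ))))
  else if 4 ≤ k ∧ Even k then
    2 * (2 * π * I) ^ k / (Nat.factorial (k - 1)) *
      (-(bernoulli k : ℂ) / (2 * k) +
        ∑' n : ℕ, sigmaC (k - 1) (n + 1) * Complex.exp (2 * π * I * τ) ^ (n + 1))
  else 0

/-- the Wirtinger derivative `∂_τ E_k`: for `f = g + c/(τ−τ̄)` with `g` holomorphic,
`∂_τ f = g′(τ) − c/(τ−τ̄)²`; for `E₂` the constant is `c = −2πi`, and for `k ≠ 2`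
the series `E_k` is holomorphic. -/
def dEis (k : ℕ) (τ : ℂ) : ℂ :=
  if k = 2 then deriv E2hol τ + 2 * π * I / (τ - conj τ) ^ 2
  else deriv (Eis k) τ

/-- the shifted derivative `δ_k E_k = ∂_τ E_k + (k/(τ−τ̄))·E_k` -/
def deltaEis (k : ℕ) (τ : ℂ) : ℂ := dEis k τ + (k : ℂ) / (τ - conj τ) * Eis k τ



-- norm of q-powers
lemma norm_qpow (z : ℂ) (k : ℕ) :
    ‖Complex.exp (2 * π * I * z) ^ k‖ = Real.exp (-(2 * π * z.im)) ^ k := by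
  rw [norm_pow, Complex.norm_exp]
  congr 2
  simp [Complex.mul_re, Complex.mul_im]

lemma qnorm_lt_one {y : ℝ} (hz : 0 < y) : Real.exp (-(2 * π * y)) < 1 := by
  rw [Real.exp_lt_one_iff]
  have := Real.pi_pos
  nlinarith

lemma sigmaC_norm_le (k n : ℕ) : ‖sigmaC k n‖ ≤ (n : ℝ) ^ (k + 1) := by
  have h1 : ‖sigmaC k n‖ ≤ ∑ d ∈ n.divisors, ‖(d : ℂ) ^ k‖ := norm_sum_le _ _
  have h2 : ∀ d ∈ n.divisors, ‖(d : ℂ) ^ k‖ ≤ (n : ℝ) ^ k := by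
    intro d hd
    rw [norm_pow, Complex.norm_natCast]
    exact pow_le_pow_left₀ (by positivity) (Nat.cast_le.2 (Nat.divisor_le hd)) k
  calc ‖sigmaC k n‖ ≤ ∑ d ∈ n.divisors, ‖(d : ℂ) ^ k‖ := h1
    _ ≤ ∑ _d ∈ n.divisors, (n : ℝ) ^ k := Finset.sum_le_sum h2
    _ = (n.divisors.card : ℝ) * (n : ℝ) ^ k := by rw [Finset.sum_const, nsmul_eq_mul]
    _ ≤ (n : ℝ) * (n : ℝ) ^ k := by
        apply mul_le_mul_of_nonneg_right _ (by positivity)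
        have : n.divisors ⊆ Finset.Icc 1 n := by
          intro d hd
          rw [Nat.mem_divisors] at hd
          rw [Finset.mem_Icc]
          exact ⟨Nat.pos_of_dvd_of_pos hd.1 (Nat.pos_of_ne_zero hd.2),
            Nat.le_of_dvd (Nat.pos_of_ne_zero hd.2) hd.1⟩
        have := Finset.card_le_card this
        rw [Nat.card_Icc] at this
        exact_mod_cast le_trans (Nat.cast_le.2 this) (by simp)
    _ = (n : ℝ) ^ (k + 1) := by ring

lemma summable_poly_geom (m : ℕ) {ρ : ℝ} (h0 : 0 ≤ ρ) (h1 : ρ < 1) :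
    Summable (fun n : ℕ => (n : ℝ) ^ m * ρ ^ n) := by
  simpa using summable_pow_mul_geometric_of_norm_lt_one m
    (by rwa [Real.norm_eq_abs, _root_.abs_of_nonneg h0] : ‖ρ‖ < 1)

lemma summable_norm_coef {c : ℕ → ℂ} (m : ℕ) (hc : ∀ n, ‖c n‖ ≤ (n : ℝ) ^ m + 1)
    {τ : ℂ} (hτ : 0 < τ.im) :
    Summable (fun n => ‖c n * Complex.exp (2 * π * I * τ) ^ n‖) := by
  set ρ : ℝ := Real.exp (-(2 * π * τ.im)) with hρ
  have h0 : 0 ≤ ρ := le_of_lt (Real.exp_pos _)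
  have h1 : ρ < 1 := qnorm_lt_one hτ
  have hsum : Summable (fun n : ℕ => ((n : ℝ) ^ m + 1) * ρ ^ n) :=
    ((summable_poly_geom m h0 h1).add (summable_geometric_of_lt_one h0 h1)).congr
      (fun n => by ring)
  apply Summable.of_nonneg_of_le (fun n => norm_nonneg _) (fun n => ?_) hsum
  rw [norm_mul, norm_qpow]
  have hq : (0:ℝ) ≤ ρ ^ n := by positivity
  exact mul_le_mul (hc n) le_rfl hq (by positivity)

/-- coefficient sequences of the normalized Eisenstein q-series -/
def cA : ℕ → ℂ := fun n => if n = 0 then -(1/24) else sigmaC 1 n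
def cB : ℕ → ℂ := fun n => if n = 0 then 1/240 else sigmaC 3 n
def cC : ℕ → ℂ := fun n => if n = 0 then -(1/504) else sigmaC 5 n
def cD : ℕ → ℂ := fun n => (n : ℂ) * sigmaC 3 n

lemma cA_bound : ∀ n, ‖cA n‖ ≤ (n : ℝ) ^ 2 + 1 := by
  intro n
  rcases n with - | m
  · simp [cA]; norm_num
  · simp only [cA, if_neg (Nat.succ_ne_zero m)]
    exact le_trans (sigmaC_norm_le 1 (m+1)) (by push_cast; nlinarith [sq_nonneg ((m:ℝ)+1)])

lemma cB_bound : ∀ n, ‖cB n‖ ≤ (n : ℝ) ^ 4 + 1 := by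
  intro n
  rcases n with - | m
  · simp [cB]; norm_num
  · simp only [cB, if_neg (Nat.succ_ne_zero m)]
    exact le_trans (sigmaC_norm_le 3 (m+1)) (by push_cast; nlinarith [pow_pos (show (0:ℝ) < (m:ℝ)+1 by positivity) 4])

lemma cC_bound : ∀ n, ‖cC n‖ ≤ (n : ℝ) ^ 6 + 1 := by
  intro n
  rcases n with - | m
  · simp [cC]; norm_num
  · simp only [cC, if_neg (Nat.succ_ne_zero m)]
    exact le_trans (sigmaC_norm_le 5 (m+1)) (by push_cast; nlinarith [pow_pos (show (0:ℝ) < (m:ℝ)+1 by positivity) 6])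

lemma cD_bound : ∀ n, ‖cD n‖ ≤ (n : ℝ) ^ 5 + 1 := by
  intro n
  have h : ‖cD n‖ = (n : ℝ) * ‖sigmaC 3 n‖ := by
    rw [cD, norm_mul, Complex.norm_natCast]
  rw [h]
  have h1 := sigmaC_norm_le 3 n
  have h2 : (n:ℝ) * ‖sigmaC 3 n‖ ≤ (n:ℝ) * (n:ℝ)^(3+1) :=
    mul_le_mul_of_nonneg_left h1 (by positivity)
  have h3 : (n:ℝ) * (n:ℝ)^(3+1) = (n:ℝ)^5 := by ring
  linarith

/-- the basic series `∑ c n q^n` is summable -/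
lemma summable_coef {c : ℕ → ℂ} (m : ℕ) (hc : ∀ n, ‖c n‖ ≤ (n : ℝ) ^ m + 1)
    {τ : ℂ} (hτ : 0 < τ.im) :
    Summable (fun n => c n * Complex.exp (2 * π * I * τ) ^ n) :=
  (summable_norm_coef m hc hτ).of_norm

/-- term-by-term differentiation of `∑ c n q^n` on the upper half plane -/
lemma hasDerivAt_qseries {c : ℕ → ℂ} (m : ℕ) (hc : ∀ n, ‖c n‖ ≤ (n : ℝ) ^ m + 1)
    {τ : ℂ} (hτ : 0 < τ.im) :
    HasDerivAt (fun z => ∑' n : ℕ, c n * Complex.exp (2 * π * I * z) ^ n)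
      (∑' n : ℕ, c n * (2 * π * I * n) * Complex.exp (2 * π * I * τ) ^ n) τ := by
  set t : Set ℂ := {z | τ.im / 2 < z.im} with ht
  set ρ : ℝ := Real.exp (-(2 * π * (τ.im / 2))) with hρdef
  have hρ0 : 0 ≤ ρ := le_of_lt (Real.exp_pos _)
  have hρ1 : ρ < 1 := qnorm_lt_one (half_pos hτ)
  have hopen : IsOpen t := isOpen_lt continuous_const Complex.continuous_im
  have hconn : IsPreconnected t :=
    (convex_halfSpace_im_gt (τ.im / 2)).isPreconnected
  have hmem : τ ∈ t := by simp only [ht, Set.mem_setOf_eq]; linarith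
  have hderiv : ∀ n : ℕ, ∀ z ∈ t,
      HasDerivAt (fun w => c n * Complex.exp (2 * π * I * w) ^ n)
        (c n * (2 * π * I * n) * Complex.exp (2 * π * I * z) ^ n) z := by
    intro n z _
    have h1 : HasDerivAt (fun w : ℂ => Complex.exp (2 * π * I * w))
        (2 * π * I * Complex.exp (2 * π * I * z)) z := by
      have := ((hasDerivAt_id z).const_mul (2 * π * I)).cexp
      simpa [mul_comm] using this
    have h2 := (h1.pow n).const_mul (c n)
    refine h2.congr_deriv ?_
    rcases n with - | k
    · simp
    · have : Complex.exp (2 * π * I * z) ^ (k + 1)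
          = Complex.exp (2 * π * I * z) ^ k * Complex.exp (2 * π * I * z) := by ring
      rw [this]
      push_cast
      ring
  have hbound : ∀ n : ℕ, ∀ z ∈ t,
      ‖c n * (2 * π * I * n) * Complex.exp (2 * π * I * z) ^ n‖
        ≤ (2 * π) * (((n:ℝ) ^ (m + 1) + n) * ρ ^ n) := by
    intro n z hzt
    rw [norm_mul, norm_mul, norm_qpow]
    have e1 : ‖(2 * π * I * n : ℂ)‖ = 2 * π * n := by
      simp [norm_mul, Complex.norm_natCast, Real.pi_nonneg, abs_of_nonneg]
    rw [e1]
    have hexp : Real.exp (-(2 * π * z.im)) ^ n ≤ ρ ^ n := by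
      apply pow_le_pow_left₀ (le_of_lt (Real.exp_pos _))
      apply Real.exp_le_exp.2
      have : τ.im / 2 < z.im := hzt
      nlinarith [Real.pi_pos]
    have hnn : (0:ℝ) ≤ 2 * π * n := by positivity
    calc ‖c n‖ * (2 * π * n) * Real.exp (-(2 * π * z.im)) ^ n
        ≤ ((n:ℝ) ^ m + 1) * (2 * π * n) * ρ ^ n := by
          apply mul_le_mul (mul_le_mul (hc n) le_rfl hnn (by positivity)) hexp
            (by positivity) (by positivity)
      _ = (2 * π) * (((n:ℝ) ^ m * n + n) * ρ ^ n) := by ring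
      _ ≤ (2 * π) * (((n:ℝ) ^ (m + 1) + n) * ρ ^ n) := by
          have : (n:ℝ) ^ m * n = (n:ℝ) ^ (m+1) := by ring
          rw [this]
  have hu : Summable (fun n : ℕ => (2 * π) * (((n:ℝ) ^ (m + 1) + n) * ρ ^ n)) := by
    apply Summable.mul_left
    have h5 := summable_poly_geom (m + 1) hρ0 hρ1
    have h6 := summable_poly_geom 1 hρ0 hρ1
    simpa [add_mul, pow_one] using h5.add h6
  have hf0 : Summable (fun n => c n * Complex.exp (2 * π * I * τ) ^ n) :=
    summable_coef m hc hτ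
  exact hasDerivAt_tsum_of_isPreconnected hu hopen hconn hderiv hbound hmem hf0 hmem

section Arith

/-- quadruples (a,x,b,y) of positive naturals with a*x+b*y = n -/
def Sol (n : ℕ) : Finset (ℕ × ℕ × ℕ × ℕ) :=
  (Finset.Icc 1 n ×ˢ Finset.Icc 1 n ×ˢ Finset.Icc 1 n ×ˢ Finset.Icc 1 n).filter
    fun t => t.1 * t.2.1 + t.2.2.1 * t.2.2.2 = n

lemma mem_Sol {n : ℕ} {t : ℕ × ℕ × ℕ × ℕ} :
    t ∈ Sol n ↔ 0 < t.1 ∧ 0 < t.2.1 ∧ 0 < t.2.2.1 ∧ 0 < t.2.2.2 ∧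
      t.1 * t.2.1 + t.2.2.1 * t.2.2.2 = n := by
  obtain ⟨a, x, b, y⟩ := t
  simp only [Sol, Finset.mem_filter, Finset.mem_product, Finset.mem_Icc]
  constructor
  · rintro ⟨⟨⟨h1,_⟩,⟨h2,_⟩,⟨h3,_⟩,⟨h4,_⟩⟩, h5⟩
    exact ⟨h1, h2, h3, h4, h5⟩
  · rintro ⟨h1, h2, h3, h4, h5⟩
    have hax : a * x ≤ n := by omega
    have hby : b * y ≤ n := by omega
    refine ⟨⟨⟨h1, ?_⟩, ⟨h2, ?_⟩, ⟨h3, ?_⟩, ⟨h4, ?_⟩⟩, h5⟩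
    · calc a ≤ a * x := Nat.le_mul_of_pos_right a h2
        _ ≤ n := hax
    · calc x ≤ a * x := Nat.le_mul_of_pos_left x h1
        _ ≤ n := hax
    · calc b ≤ b * y := Nat.le_mul_of_pos_right b h4
        _ ≤ n := hby
    · calc y ≤ b * y := Nat.le_mul_of_pos_left y h3
        _ ≤ n := hby

lemma split3 {M : Type*} [AddCommMonoid M] (s : Finset (ℕ × ℕ × ℕ × ℕ)) (f : ℕ × ℕ × ℕ × ℕ → M)
    (c : ℕ × ℕ × ℕ × ℕ → ℕ) (d : ℕ × ℕ × ℕ × ℕ → ℕ) :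
    ∑ t ∈ s, f t = ∑ t ∈ s.filter (fun t => d t < c t), f t
      + ∑ t ∈ s.filter (fun t => c t < d t), f t
      + ∑ t ∈ s.filter (fun t => c t = d t), f t := by
  have h1 := Finset.sum_filter_add_sum_filter_not s (fun t => c t = d t) f
  have h2 := Finset.sum_filter_add_sum_filter_not (s.filter (fun t => ¬ c t = d t))
    (fun t => c t < d t) f
  rw [Finset.filter_filter, Finset.filter_filter] at h2
  have e1 : s.filter (fun t => ¬c t = d t ∧ c t < d t) = s.filter (fun t => c t < d t) := by
    apply Finset.filter_congr; intro t _; constructor <;> intro h <;> omega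
  have e2 : s.filter (fun t => ¬c t = d t ∧ ¬c t < d t) = s.filter (fun t => d t < c t) := by
    apply Finset.filter_congr; intro t _; constructor <;> intro h <;> omega
  rw [e1, e2] at h2
  rw [← h1, ← h2]
  abel

lemma keyM (n : ℕ) (F : ℕ → ℕ → ℤ) :
    ∑ t ∈ Sol n, F t.1 t.2.2.1
      = ∑ t ∈ (Sol n).filter (fun t => t.1 < t.2.2.1),
          (F t.1 (t.2.2.1 - t.1) + F (t.2.2.1 - t.1) t.1)
        + ∑ d ∈ n.divisors, ∑ a ∈ Finset.Ico 1 d, F a (d - a) := by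
  rw [split3 (Sol n) _ (fun t => t.2.1) (fun t => t.2.2.2)]
  have B1 : ∑ t ∈ (Sol n).filter (fun t => t.2.2.2 < t.2.1), F t.1 t.2.2.1
      = ∑ t ∈ (Sol n).filter (fun t => t.1 < t.2.2.1), F t.1 (t.2.2.1 - t.1) := by
    apply Finset.sum_nbij' (fun t => (t.1, t.2.1 - t.2.2.2, t.1 + t.2.2.1, t.2.2.2))
      (fun t => (t.1, t.2.1 + t.2.2.2, t.2.2.1 - t.1, t.2.2.2))
    · rintro ⟨a, x, b, y⟩ ht
      simp only [Finset.mem_filter, mem_Sol] at ht ⊢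
      obtain ⟨⟨h1, h2, h3, h4, h5⟩, h6⟩ := ht
      obtain ⟨u, rfl⟩ : ∃ u, x = y + u := ⟨x - y, by omega⟩
      simp only [Nat.add_sub_cancel_left]
      refine ⟨⟨h1, by omega, by omega, h4, ?_⟩, by omega⟩
      rw [← h5]; ring
    · rintro ⟨a, x, b, y⟩ ht
      simp only [Finset.mem_filter, mem_Sol] at ht ⊢
      obtain ⟨⟨h1, h2, h3, h4, h5⟩, h6⟩ := ht
      obtain ⟨u, hu, rfl⟩ : ∃ u, 0 < u ∧ b = a + u := ⟨b - a, by omega, by omega⟩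
      simp only [Nat.add_sub_cancel_left]
      refine ⟨⟨h1, by omega, hu, h4, ?_⟩, by omega⟩
      rw [← h5]; ring
    · rintro ⟨a, x, b, y⟩ ht
      simp only [Finset.mem_filter, mem_Sol] at ht
      obtain ⟨⟨h1, h2, h3, h4, h5⟩, h6⟩ := ht
      simp only [Prod.mk.injEq, Nat.add_sub_cancel_left, Nat.add_sub_cancel,
        eq_self_iff_true, true_and, and_true]
      omega
    · rintro ⟨a, x, b, y⟩ ht
      simp only [Finset.mem_filter, mem_Sol] at ht
      obtain ⟨⟨h1, h2, h3, h4, h5⟩, h6⟩ := ht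
      simp only [Prod.mk.injEq, Nat.add_sub_cancel_left, Nat.add_sub_cancel,
        eq_self_iff_true, true_and, and_true]
      omega
    · rintro ⟨a, x, b, y⟩ ht
      simp only [Nat.add_sub_cancel_left, Nat.add_sub_cancel]
  have B2 : ∑ t ∈ (Sol n).filter (fun t => t.2.1 < t.2.2.2), F t.1 t.2.2.1
      = ∑ t ∈ (Sol n).filter (fun t => t.1 < t.2.2.1), F (t.2.2.1 - t.1) t.1 := by
    apply Finset.sum_nbij' (fun t => (t.2.2.1, t.2.2.2 - t.2.1, t.1 + t.2.2.1, t.2.1))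
      (fun t => (t.2.2.1 - t.1, t.2.2.2, t.1, t.2.1 + t.2.2.2))
    · rintro ⟨a, x, b, y⟩ ht
      simp only [Finset.mem_filter, mem_Sol] at ht ⊢
      obtain ⟨⟨h1, h2, h3, h4, h5⟩, h6⟩ := ht
      obtain ⟨u, hu, rfl⟩ : ∃ u, 0 < u ∧ y = x + u := ⟨y - x, by omega, by omega⟩
      simp only [Nat.add_sub_cancel_left]
      refine ⟨⟨h3, hu, by omega, h2, ?_⟩, by omega⟩
      rw [← h5]; ring
    · rintro ⟨a, x, b, y⟩ ht
      simp only [Finset.mem_filter, mem_Sol] at ht ⊢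
      obtain ⟨⟨h1, h2, h3, h4, h5⟩, h6⟩ := ht
      obtain ⟨u, hu, rfl⟩ : ∃ u, 0 < u ∧ b = a + u := ⟨b - a, by omega, by omega⟩
      simp only [Nat.add_sub_cancel_left]
      refine ⟨⟨hu, h4, h1, by omega, ?_⟩, by omega⟩
      rw [← h5]; ring
    · rintro ⟨a, x, b, y⟩ ht
      simp only [Finset.mem_filter, mem_Sol] at ht
      obtain ⟨⟨h1, h2, h3, h4, h5⟩, h6⟩ := ht
      simp only [Prod.mk.injEq, Nat.add_sub_cancel_left, Nat.add_sub_cancel,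
        eq_self_iff_true, true_and, and_true]
      omega
    · rintro ⟨a, x, b, y⟩ ht
      simp only [Finset.mem_filter, mem_Sol] at ht
      obtain ⟨⟨h1, h2, h3, h4, h5⟩, h6⟩ := ht
      simp only [Prod.mk.injEq, Nat.add_sub_cancel_left, Nat.add_sub_cancel,
        eq_self_iff_true, true_and, and_true]
      omega
    · rintro ⟨a, x, b, y⟩ ht
      simp only [Nat.add_sub_cancel_left, Nat.add_sub_cancel]
  have B3 : ∑ t ∈ (Sol n).filter (fun t => t.2.1 = t.2.2.2), F t.1 t.2.2.1
      = ∑ d ∈ n.divisors, ∑ a ∈ Finset.Ico 1 d, F a (d - a) := by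
    refine Eq.trans ?_
      (Finset.sum_sigma n.divisors (fun d => Finset.Ico 1 d) (fun p => F p.2 (p.1 - p.2)))
    apply Finset.sum_nbij' (fun t => (⟨t.1 + t.2.2.1, t.1⟩ : Σ _ : ℕ, ℕ))
      (fun p => (p.2, n / p.1, p.1 - p.2, n / p.1))
    · rintro ⟨a, x, b, y⟩ ht
      simp only [Finset.mem_filter, mem_Sol] at ht
      obtain ⟨⟨h1, h2, h3, h4, h5⟩, h6⟩ := ht
      subst h6
      simp only [Finset.mem_sigma, Nat.mem_divisors, Finset.mem_Ico]
      have hdvd : (a + b) * x = n := by rw [← h5]; ring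
      have hn0 : n ≠ 0 := by
        have := Nat.mul_pos (show 0 < a + b by omega) h2
        omega
      exact ⟨⟨⟨x, hdvd.symm⟩, hn0⟩, h1, by omega⟩
    · rintro ⟨d, a⟩ hp
      simp only [Finset.mem_sigma, Nat.mem_divisors, Finset.mem_Ico] at hp
      obtain ⟨⟨hdvd, hn⟩, ha1, had⟩ := hp
      simp only [Finset.mem_filter, mem_Sol]
      have hd0 : 0 < d := by omega
      have hq : 0 < n / d := Nat.div_pos (Nat.le_of_dvd (Nat.pos_of_ne_zero hn) hdvd) hd0
      have h : (a + (d - a)) * (n / d) = n := by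
        have hda : a + (d - a) = d := by omega
        rw [hda, Nat.mul_div_cancel' hdvd]
      refine ⟨⟨ha1, hq, by omega, hq, ?_⟩, by simp⟩
      conv_rhs => rw [← h]
      ring
    · rintro ⟨a, x, b, y⟩ ht
      simp only [Finset.mem_filter, mem_Sol] at ht
      obtain ⟨⟨h1, h2, h3, h4, h5⟩, h6⟩ := ht
      subst h6
      have hdvd : (a + b) * x = n := by rw [← h5]; ring
      have hx : n / (a + b) = x := by
        rw [← hdvd]; exact Nat.mul_div_cancel_left x (by omega)
      simp only [Prod.mk.injEq, hx, and_true, true_and]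
      omega
    · rintro ⟨d, a⟩ hp
      simp only [Finset.mem_sigma, Nat.mem_divisors, Finset.mem_Ico] at hp
      obtain ⟨⟨hdvd, hn⟩, ha1, had⟩ := hp
      have hda : a + (d - a) = d := by omega
      simp [hda]
    · rintro ⟨a, x, b, y⟩ ht
      simp only [Nat.add_sub_cancel_left]
  rw [B1, B2, B3, ← Finset.sum_add_distrib]

lemma keyA (n : ℕ) (F : ℕ → ℕ → ℤ) :
    ∑ t ∈ Sol n, F t.1 t.2.2.1
      = ∑ t ∈ (Sol n).filter (fun t => t.1 < t.2.2.1), (F t.1 t.2.2.1 + F t.2.2.1 t.1)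
        + ∑ d ∈ n.divisors, ((n / d : ℕ) - 1 : ℤ) * F d d := by
  rw [split3 (Sol n) _ (fun t => t.1) (fun t => t.2.2.1)]
  have B1 : ∑ t ∈ (Sol n).filter (fun t => t.2.2.1 < t.1), F t.1 t.2.2.1
      = ∑ t ∈ (Sol n).filter (fun t => t.1 < t.2.2.1), F t.2.2.1 t.1 := by
    apply Finset.sum_nbij' (fun t => (t.2.2.1, t.2.2.2, t.1, t.2.1))
      (fun t => (t.2.2.1, t.2.2.2, t.1, t.2.1))
    · rintro ⟨a, x, b, y⟩ ht
      simp only [Finset.mem_filter, mem_Sol] at ht ⊢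
      obtain ⟨⟨h1, h2, h3, h4, h5⟩, h6⟩ := ht
      exact ⟨⟨h3, h4, h1, h2, by rw [← h5]; ring⟩, h6⟩
    · rintro ⟨a, x, b, y⟩ ht
      simp only [Finset.mem_filter, mem_Sol] at ht ⊢
      obtain ⟨⟨h1, h2, h3, h4, h5⟩, h6⟩ := ht
      exact ⟨⟨h3, h4, h1, h2, by rw [← h5]; ring⟩, h6⟩
    · rintro ⟨a, x, b, y⟩ _; rfl
    · rintro ⟨a, x, b, y⟩ _; rfl
    · rintro ⟨a, x, b, y⟩ _; rfl
  have B3 : ∑ t ∈ (Sol n).filter (fun t => t.1 = t.2.2.1), F t.1 t.2.2.1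
      = ∑ d ∈ n.divisors, ((n / d : ℕ) - 1 : ℤ) * F d d := by
    have step : ∑ t ∈ (Sol n).filter (fun t => t.1 = t.2.2.1), F t.1 t.2.2.1
        = ∑ p ∈ n.divisors.sigma (fun d => Finset.Ico 1 (n / d)), F p.1 p.1 := by
      apply Finset.sum_nbij' (fun t => (⟨t.1, t.2.1⟩ : Σ _ : ℕ, ℕ))
        (fun p => (p.1, p.2, p.1, n / p.1 - p.2))
      · rintro ⟨a, x, b, y⟩ ht
        simp only [Finset.mem_filter, mem_Sol] at ht
        obtain ⟨⟨h1, h2, h3, h4, h5⟩, h6⟩ := ht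
        subst h6
        simp only [Finset.mem_sigma, Nat.mem_divisors, Finset.mem_Ico]
        have hdvd : a * (x + y) = n := by rw [← h5]; ring
        have hn0 : n ≠ 0 := by
          have := Nat.mul_pos h1 (show 0 < x + y by omega)
          omega
        have hq : n / a = x + y := by
          rw [← hdvd]; exact Nat.mul_div_cancel_left _ h1
        exact ⟨⟨⟨x + y, hdvd.symm⟩, hn0⟩, h2, by omega⟩
      · rintro ⟨d, x⟩ hp
        simp only [Finset.mem_sigma, Nat.mem_divisors, Finset.mem_Ico] at hp
        obtain ⟨⟨hdvd, hn⟩, hx1, hxd⟩ := hp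
        simp only [Finset.mem_filter, mem_Sol]
        have hd0 : 0 < d := (Nat.pos_of_mem_divisors (Nat.mem_divisors.2 ⟨hdvd, hn⟩))
        have h : d * (x + (n / d - x)) = n := by
          have : x + (n / d - x) = n / d := by omega
          rw [this, Nat.mul_div_cancel' hdvd]
        refine ⟨⟨hd0, hx1, hd0, by omega, ?_⟩, by simp⟩
        conv_rhs => rw [← h]
        ring
      · rintro ⟨a, x, b, y⟩ ht
        simp only [Finset.mem_filter, mem_Sol] at ht
        obtain ⟨⟨h1, h2, h3, h4, h5⟩, h6⟩ := ht
        subst h6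
        have hdvd : a * (x + y) = n := by rw [← h5]; ring
        have hq : n / a = x + y := by
          rw [← hdvd]; exact Nat.mul_div_cancel_left _ h1
        simp only [Prod.mk.injEq, hq, and_true, true_and]
        omega
      · rintro ⟨d, x⟩ hp
        rfl
      · rintro ⟨a, x, b, y⟩ ht
        simp only [Finset.mem_filter, mem_Sol] at ht
        obtain ⟨⟨h1, h2, h3, h4, h5⟩, h6⟩ := ht
        subst h6
        rfl
    rw [step, Finset.sum_sigma]
    apply Finset.sum_congr rfl
    intro d hd
    simp only
    rw [Finset.sum_const, Nat.card_Ico, nsmul_eq_mul]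
    have hd0 : 0 < d := Nat.pos_of_mem_divisors hd
    have hq : 0 < n / d := Nat.div_pos (Nat.le_of_dvd
      (Nat.pos_of_ne_zero (Nat.mem_divisors.1 hd).2) (Nat.mem_divisors.1 hd).1) hd0
    have : ((n / d - 1 : ℕ) : ℤ) = (n / d : ℕ) - 1 := by
      push_cast [Nat.cast_sub hq]
      ring
    rw [this]
  rw [B1, B3, ← Finset.sum_add_distrib]
  congr 1
  apply Finset.sum_congr rfl
  intro t _
  ring

lemma ps1 (d : ℕ) : 2 * ∑ a ∈ Finset.range d, (a : ℤ) = (d : ℤ)^2 - d := by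
  induction d with
  | zero => simp
  | succ m ih => rw [Finset.sum_range_succ, mul_add, ih]; push_cast; ring

lemma ps2 (d : ℕ) : 6 * ∑ a ∈ Finset.range d, (a : ℤ)^2 = 2*(d : ℤ)^3 - 3*d^2 + d := by
  induction d with
  | zero => simp
  | succ m ih => rw [Finset.sum_range_succ, mul_add, ih]; push_cast; ring

lemma ps3 (d : ℕ) : 4 * ∑ a ∈ Finset.range d, (a : ℤ)^3 = (d : ℤ)^4 - 2*d^3 + d^2 := by
  induction d with
  | zero => simp
  | succ m ih => rw [Finset.sum_range_succ, mul_add, ih]; push_cast; ring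

lemma ps4 (d : ℕ) : 30 * ∑ a ∈ Finset.range d, (a : ℤ)^4 = 6*(d : ℤ)^5 - 15*d^4 + 10*d^3 - d := by
  induction d with
  | zero => simp
  | succ m ih => rw [Finset.sum_range_succ, mul_add, ih]; push_cast; ring

/-- the weight function for the Master identity -/
def gP (a b : ℕ) : ℤ := 2*(b:ℤ)^4 + 4*(a:ℤ)*(b:ℤ)^3 + 3*(a:ℤ)^2*(b:ℤ)^2
/-- the weight function for the symmetric identity -/
def hP (a b : ℕ) : ℤ := 2*(b:ℤ)^4 - 4*(a:ℤ)*(b:ℤ)^3 + 3*(a:ℤ)^2*(b:ℤ)^2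

lemma fh (d : ℕ) : 30 * ∑ a ∈ Finset.Ico 1 d, gP a (d - a)
    = 21*(d:ℤ)^5 - 30*(d:ℤ)^4 + 10*(d:ℤ)^3 - (d:ℤ) := by
  rcases Nat.eq_zero_or_pos d with rfl | hd
  · simp
  have e1 : ∑ a ∈ Finset.Ico 1 d, gP a (d - a)
      = ∑ a ∈ Finset.Ico 1 d, ((a:ℤ)^4 - 2*(d:ℤ)*(a:ℤ)^3 + 3*(d:ℤ)^2*(a:ℤ)^2
          - 4*(d:ℤ)^3*(a:ℤ) + 2*(d:ℤ)^4) := by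
    apply Finset.sum_congr rfl
    intro a ha
    simp only [Finset.mem_Ico] at ha
    have : ((d - a : ℕ) : ℤ) = (d : ℤ) - a := by
      have : a ≤ d := le_of_lt ha.2
      push_cast [Nat.cast_sub this]; ring
    simp only [gP, this]
    ring
  have e2 : ∑ a ∈ Finset.range d, ((a:ℤ)^4 - 2*(d:ℤ)*(a:ℤ)^3 + 3*(d:ℤ)^2*(a:ℤ)^2
          - 4*(d:ℤ)^3*(a:ℤ) + 2*(d:ℤ)^4)
      = 2*(d:ℤ)^4 + ∑ a ∈ Finset.Ico 1 d, ((a:ℤ)^4 - 2*(d:ℤ)*(a:ℤ)^3 + 3*(d:ℤ)^2*(a:ℤ)^2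
          - 4*(d:ℤ)^3*(a:ℤ) + 2*(d:ℤ)^4) := by
    rw [Finset.range_eq_Ico, Finset.sum_eq_sum_Ico_succ_bot hd]
    norm_num
  have e3 : ∑ a ∈ Finset.range d, ((a:ℤ)^4 - 2*(d:ℤ)*(a:ℤ)^3 + 3*(d:ℤ)^2*(a:ℤ)^2
          - 4*(d:ℤ)^3*(a:ℤ) + 2*(d:ℤ)^4)
      = (∑ a ∈ Finset.range d, (a:ℤ)^4) - 2*(d:ℤ)*(∑ a ∈ Finset.range d, (a:ℤ)^3)
        + 3*(d:ℤ)^2*(∑ a ∈ Finset.range d, (a:ℤ)^2) - 4*(d:ℤ)^3*(∑ a ∈ Finset.range d, (a:ℤ))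
        + (d : ℤ)*(2*(d:ℤ)^4) := by
    simp only [Finset.sum_add_distrib, Finset.sum_sub_distrib, ← Finset.mul_sum,
      Finset.sum_const, Finset.card_range, nsmul_eq_mul]
    ring
  rw [e1]
  have := ps1 d; have := ps2 d; have := ps3 d; have := ps4 d
  have hval : 30 * ∑ a ∈ Finset.Ico 1 d, ((a:ℤ)^4 - 2*(d:ℤ)*(a:ℤ)^3 + 3*(d:ℤ)^2*(a:ℤ)^2
          - 4*(d:ℤ)^3*(a:ℤ) + 2*(d:ℤ)^4) = 21*(d:ℤ)^5 - 30*(d:ℤ)^4 + 10*(d:ℤ)^3 - (d:ℤ) := by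
    have h2 : (30 : ℤ) * (∑ a ∈ Finset.range d, ((a:ℤ)^4 - 2*(d:ℤ)*(a:ℤ)^3 + 3*(d:ℤ)^2*(a:ℤ)^2
          - 4*(d:ℤ)^3*(a:ℤ) + 2*(d:ℤ)^4)) = 30*(2*(d:ℤ)^4)
        + 30 * ∑ a ∈ Finset.Ico 1 d, ((a:ℤ)^4 - 2*(d:ℤ)*(a:ℤ)^3 + 3*(d:ℤ)^2*(a:ℤ)^2
          - 4*(d:ℤ)^3*(a:ℤ) + 2*(d:ℤ)^4) := by rw [e2]; ring
    rw [e3] at h2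
    linear_combination -h2 + ps4 d - 15*(d:ℤ)*ps3 d + 15*(d:ℤ)^2*ps2 d - 60*(d:ℤ)^3*ps1 d
  exact hval

/-- integer divisor power sum -/
def sigmaZ (k n : ℕ) : ℤ := ∑ d ∈ n.divisors, (d : ℤ)^k

lemma sol_eq_conv (n : ℕ) :
    ∑ t ∈ Sol n, (t.1 : ℤ) * (t.2.2.1 : ℤ)^3
      = ∑ ij ∈ Finset.HasAntidiagonal.antidiagonal n, sigmaZ 1 ij.1 * sigmaZ 3 ij.2 := by
  have step : ∑ ij ∈ Finset.HasAntidiagonal.antidiagonal n, sigmaZ 1 ij.1 * sigmaZ 3 ij.2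
      = ∑ p ∈ (Finset.HasAntidiagonal.antidiagonal n).sigma (fun ij => ij.1.divisors ×ˢ ij.2.divisors),
          (p.2.1 : ℤ) * (p.2.2 : ℤ)^3 := by
    rw [Finset.sum_sigma]
    apply Finset.sum_congr rfl
    rintro ⟨i, j⟩ _
    rw [Finset.sum_product]
    simp only [sigmaZ]
    rw [Finset.sum_mul_sum]
    simp [pow_one]
  rw [step]
  apply Finset.sum_nbij' (fun t => (⟨(t.1 * t.2.1, t.2.2.1 * t.2.2.2), (t.1, t.2.2.1)⟩ :
      Σ _ : ℕ × ℕ, ℕ × ℕ))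
    (fun p => (p.2.1, p.1.1 / p.2.1, p.2.2, p.1.2 / p.2.2))
  · rintro ⟨a, x, b, y⟩ ht
    rw [mem_Sol] at ht
    obtain ⟨h1, h2, h3, h4, h5⟩ := ht
    simp only [Finset.mem_sigma, Finset.HasAntidiagonal.mem_antidiagonal, Finset.mem_product, Nat.mem_divisors]
    exact ⟨h5, ⟨Dvd.intro x rfl, by positivity⟩, ⟨Dvd.intro y rfl, by positivity⟩⟩
  · rintro ⟨⟨i, j⟩, a, b⟩ hp
    simp only [Finset.mem_sigma, Finset.HasAntidiagonal.mem_antidiagonal, Finset.mem_product,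
      Nat.mem_divisors] at hp
    obtain ⟨hij, ⟨hai, hi0⟩, ⟨hbj, hj0⟩⟩ := hp
    rw [mem_Sol]
    have ha0 : 0 < a := Nat.pos_of_dvd_of_pos hai (Nat.pos_of_ne_zero hi0)
    have hb0 : 0 < b := Nat.pos_of_dvd_of_pos hbj (Nat.pos_of_ne_zero hj0)
    refine ⟨ha0, Nat.div_pos (Nat.le_of_dvd (Nat.pos_of_ne_zero hi0) hai) ha0,
      hb0, Nat.div_pos (Nat.le_of_dvd (Nat.pos_of_ne_zero hj0) hbj) hb0, ?_⟩
    rw [Nat.mul_div_cancel' hai, Nat.mul_div_cancel' hbj, hij]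
  · rintro ⟨a, x, b, y⟩ ht
    rw [mem_Sol] at ht
    obtain ⟨h1, h2, h3, h4, h5⟩ := ht
    simp only [Nat.mul_div_cancel_left x h1, Nat.mul_div_cancel_left y h3]
  · rintro ⟨⟨i, j⟩, a, b⟩ hp
    simp only [Finset.mem_sigma, Finset.HasAntidiagonal.mem_antidiagonal, Finset.mem_product,
      Nat.mem_divisors] at hp
    obtain ⟨hij, ⟨hai, hi0⟩, ⟨hbj, hj0⟩⟩ := hp
    simp only [Nat.mul_div_cancel' hai, Nat.mul_div_cancel' hbj]
  · rintro ⟨a, x, b, y⟩ _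
    rfl

theorem conv13 (n : ℕ) :
    240 * ∑ ij ∈ Finset.HasAntidiagonal.antidiagonal n, sigmaZ 1 ij.1 * sigmaZ 3 ij.2
      = 21 * sigmaZ 5 n + 10 * sigmaZ 3 n - sigmaZ 1 n - 30 * n * sigmaZ 3 n := by
  have hM := keyM n gP
  have hA := keyA n hP
  have hpt : ∑ t ∈ (Sol n).filter (fun t => t.1 < t.2.2.1),
        (gP t.1 (t.2.2.1 - t.1) + gP (t.2.2.1 - t.1) t.1)
      = ∑ t ∈ (Sol n).filter (fun t => t.1 < t.2.2.1),
        (hP t.1 t.2.2.1 + hP t.2.2.1 t.1) := by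
    apply Finset.sum_congr rfl
    rintro ⟨a, x, b, y⟩ ht
    simp only [Finset.mem_filter] at ht
    have hab : a < b := ht.2
    have hc : ((b - a : ℕ) : ℤ) = (b : ℤ) - a := by
      push_cast [Nat.cast_sub hab.le]; ring
    simp only [gP, hP, hc]
    ring
  have comb : 8 * ∑ t ∈ Sol n, (t.1 : ℤ) * (t.2.2.1 : ℤ)^3
      = ∑ d ∈ n.divisors, ∑ a ∈ Finset.Ico 1 d, gP a (d - a)
        - ∑ d ∈ n.divisors, ((n / d : ℕ) - 1 : ℤ) * hP d d := by
    have h8 : ∑ t ∈ Sol n, (gP t.1 t.2.2.1 - hP t.1 t.2.2.1)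
        = 8 * ∑ t ∈ Sol n, (t.1 : ℤ) * (t.2.2.1 : ℤ)^3 := by
      rw [Finset.mul_sum]
      apply Finset.sum_congr rfl
      intro t _
      simp only [gP, hP]; ring
    rw [← h8, Finset.sum_sub_distrib, hM, hA, hpt]
    ring
  have hD : 30 * ∑ d ∈ n.divisors, ∑ a ∈ Finset.Ico 1 d, gP a (d - a)
      = 21 * sigmaZ 5 n - 30 * sigmaZ 4 n + 10 * sigmaZ 3 n - sigmaZ 1 n := by
    rw [Finset.mul_sum]
    have : ∀ d ∈ n.divisors, 30 * ∑ a ∈ Finset.Ico 1 d, gP a (d - a)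
        = 21*(d:ℤ)^5 - 30*(d:ℤ)^4 + 10*(d:ℤ)^3 - (d:ℤ) := fun d _ => fh d
    rw [Finset.sum_congr rfl this]
    simp only [sigmaZ, Finset.sum_add_distrib, Finset.sum_sub_distrib, ← Finset.mul_sum]
    ring
  have hE : ∑ d ∈ n.divisors, ((n / d : ℕ) - 1 : ℤ) * hP d d
      = (n : ℤ) * sigmaZ 3 n - sigmaZ 4 n := by
    have : ∀ d ∈ n.divisors, ((n / d : ℕ) - 1 : ℤ) * hP d d
        = (n : ℤ) * (d : ℤ)^3 - (d : ℤ)^4 := by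
      intro d hd
      obtain ⟨hdvd, -⟩ := Nat.mem_divisors.1 hd
      have hnd : ((n / d : ℕ) : ℤ) * (d : ℤ) = (n : ℤ) := by
        exact_mod_cast congrArg (Nat.cast : ℕ → ℤ) (Nat.div_mul_cancel hdvd)
      simp only [hP]
      linear_combination (d:ℤ)^3 * hnd
    rw [Finset.sum_congr rfl this]
    simp only [sigmaZ, Finset.sum_sub_distrib, ← Finset.mul_sum]
  rw [← sol_eq_conv]
  linear_combination 30 * comb + hD - 30 * hE

end Arith

lemma sigmaC_eq_cast (k n : ℕ) : sigmaC k n = ((sigmaZ k n : ℤ) : ℂ) := by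
  simp only [sigmaC, sigmaZ]
  push_cast
  rfl

lemma coef_id (n : ℕ) :
    -5760 * ∑ kl ∈ Finset.HasAntidiagonal.antidiagonal n, cA kl.1 * cB kl.2
      = -504 * cC n + 720 * cD n := by
  rcases n with - | m
  · simp [cA, cB, cC, cD, sigmaC]
    norm_num
  · have key := conv13 (m + 1)
    have keyC : (240 : ℂ) * ((∑ ij ∈ Finset.HasAntidiagonal.antidiagonal (m+1),
          sigmaZ 1 ij.1 * sigmaZ 3 ij.2 : ℤ) : ℂ)
        = 21 * ((sigmaZ 5 (m+1) : ℤ) : ℂ) + 10 * ((sigmaZ 3 (m+1) : ℤ) : ℂ)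
          - ((sigmaZ 1 (m+1) : ℤ) : ℂ) - 30 * (m+1 : ℕ) * ((sigmaZ 3 (m+1) : ℤ) : ℂ) := by
      exact_mod_cast congrArg (Int.cast : ℤ → ℂ) key
    have hsplit : ∑ kl ∈ Finset.HasAntidiagonal.antidiagonal (m+1), cA kl.1 * cB kl.2
        = ((∑ ij ∈ Finset.HasAntidiagonal.antidiagonal (m+1), sigmaZ 1 ij.1 * sigmaZ 3 ij.2 : ℤ) : ℂ)
          + cA 0 * cB (m+1) + cA (m+1) * cB 0 := by
      rw [Finset.Nat.sum_antidiagonal_eq_sum_range_succ_mk]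
      push_cast [Finset.Nat.sum_antidiagonal_eq_sum_range_succ_mk]
      rw [Finset.sum_range_succ', Finset.sum_range_succ, Finset.sum_range_succ',
        Finset.sum_range_succ]
      have hz1 : (sigmaZ 1 0 : ℤ) = 0 := by simp [sigmaZ]
      have hz3 : (sigmaZ 3 0 : ℤ) = 0 := by simp [sigmaZ]
      have hmid : ∀ k ∈ Finset.range m,
          cA (k + 1) * cB (m + 1 - (k + 1))
            = ((sigmaZ 1 (k+1) : ℤ) : ℂ) * ((sigmaZ 3 (m + 1 - (k+1)) : ℤ) : ℂ) := by
        intro k hk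
        rw [Finset.mem_range] at hk
        have h1 : m + 1 - (k + 1) = m - k := by omega
        have h2 : m - k ≠ 0 := by omega
        rw [h1]
        simp only [cA, cB, if_neg (Nat.succ_ne_zero k), if_neg h2]
        rw [sigmaC_eq_cast, sigmaC_eq_cast]
      rw [Finset.sum_congr rfl hmid]
      simp only [hz1, hz3, Int.cast_zero, zero_mul, mul_zero, add_zero, zero_add]
      have e0 : m + 1 - 0 = m + 1 := by omega
      have e1 : m + 1 - (m + 1) = 0 := by omega
      simp only [e0, e1, hz3, Int.cast_zero, mul_zero, add_zero]
      ring
    rw [hsplit]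
    have hc5 : cC (m+1) = ((sigmaZ 5 (m+1) : ℤ) : ℂ) := by
      simp only [cC, if_neg (Nat.succ_ne_zero m)]; exact sigmaC_eq_cast 5 (m+1)
    have hc3 : cB (m+1) = ((sigmaZ 3 (m+1) : ℤ) : ℂ) := by
      simp only [cB, if_neg (Nat.succ_ne_zero m)]; exact sigmaC_eq_cast 3 (m+1)
    have hc1 : cA (m+1) = ((sigmaZ 1 (m+1) : ℤ) : ℂ) := by
      simp only [cA, if_neg (Nat.succ_ne_zero m)]; exact sigmaC_eq_cast 1 (m+1)
    have hcD : cD (m+1) = ((m+1 : ℕ) : ℂ) * ((sigmaZ 3 (m+1) : ℤ) : ℂ) := by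
      simp only [cD]; rw [sigmaC_eq_cast]
    have hA0 : cA 0 = -(1/24) := by simp [cA]
    have hB0 : cB 0 = 1/240 := by simp [cB]
    rw [hc5, hc3, hc1, hcD, hA0, hB0]
    linear_combination (-24 : ℂ) * keyC

lemma tsum_shift {c : ℕ → ℂ} {τ : ℂ} (h : Summable (fun n => c n * Complex.exp (2*π*I*τ)^n)) :
    ∑' n : ℕ, c n * Complex.exp (2*π*I*τ)^n
      = c 0 + ∑' n : ℕ, c (n+1) * Complex.exp (2*π*I*τ)^(n+1) := by
  rw [h.tsum_eq_zero_add, pow_zero, mul_one]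

/-- the core analytic identity: Ramanujan's differential relation as a tsum identity -/
lemma core_tsum {τ : ℂ} (hτ : 0 < τ.im) :
    -5760 * ((∑' n : ℕ, cA n * Complex.exp (2*π*I*τ)^n)
        * (∑' n : ℕ, cB n * Complex.exp (2*π*I*τ)^n))
      = -504 * (∑' n : ℕ, cC n * Complex.exp (2*π*I*τ)^n)
        + 720 * (∑' n : ℕ, cD n * Complex.exp (2*π*I*τ)^n) := by
  have hA := summable_norm_coef 2 cA_bound hτ
  have hB := summable_norm_coef 4 cB_bound hτ
  have hC := (summable_norm_coef 6 cC_bound hτ).of_norm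
  have hD := (summable_norm_coef 5 cD_bound hτ).of_norm
  rw [tsum_mul_tsum_eq_tsum_sum_antidiagonal_of_summable_norm hA hB]
  have inner : ∀ n : ℕ, ∑ kl ∈ Finset.HasAntidiagonal.antidiagonal n,
        (cA kl.1 * Complex.exp (2*π*I*τ)^kl.1) * (cB kl.2 * Complex.exp (2*π*I*τ)^kl.2)
      = (∑ kl ∈ Finset.HasAntidiagonal.antidiagonal n, cA kl.1 * cB kl.2) * Complex.exp (2*π*I*τ)^n := by
    intro n
    rw [Finset.sum_mul]
    apply Finset.sum_congr rfl
    intro kl hkl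
    rw [Finset.HasAntidiagonal.mem_antidiagonal] at hkl
    rw [← hkl, pow_add]
    ring
  rw [tsum_congr inner, ← tsum_mul_left]
  have hRW : -504 * (∑' n : ℕ, cC n * Complex.exp (2*π*I*τ)^n)
        + 720 * (∑' n : ℕ, cD n * Complex.exp (2*π*I*τ)^n)
      = ∑' n : ℕ, (-504 * (cC n * Complex.exp (2*π*I*τ)^n)
          + 720 * (cD n * Complex.exp (2*π*I*τ)^n)) := by
    rw [← tsum_mul_left, ← tsum_mul_left]
    exact ((hC.mul_left _).tsum_add (hD.mul_left _)).symm
  rw [hRW]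
  apply tsum_congr
  intro n
  have := coef_id n
  linear_combination Complex.exp (2*π*I*τ)^n * this

/-- term-by-term differentiation of the shifted q-series -/
lemma hasDerivAt_qseries' {c : ℕ → ℂ} (m : ℕ) (hc : ∀ n, ‖c n‖ ≤ (n : ℝ) ^ m + 1)
    {τ : ℂ} (hτ : 0 < τ.im) :
    HasDerivAt (fun z => ∑' n : ℕ, c (n+1) * Complex.exp (2 * π * I * z) ^ (n+1))
      (∑' n : ℕ, c (n+1) * (2 * π * I * (n+1)) * Complex.exp (2 * π * I * τ) ^ (n+1)) τ := by
  set t : Set ℂ := {z | τ.im / 2 < z.im} with ht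
  set ρ : ℝ := Real.exp (-(2 * π * (τ.im / 2))) with hρdef
  have hρ0 : 0 ≤ ρ := le_of_lt (Real.exp_pos _)
  have hρ1 : ρ < 1 := qnorm_lt_one (half_pos hτ)
  have hopen : IsOpen t := isOpen_lt continuous_const Complex.continuous_im
  have hconn : IsPreconnected t :=
    (convex_halfSpace_im_gt (τ.im / 2)).isPreconnected
  have hmem : τ ∈ t := by simp only [ht, Set.mem_setOf_eq]; linarith
  have hderiv : ∀ n : ℕ, ∀ z ∈ t,
      HasDerivAt (fun w => c (n+1) * Complex.exp (2 * π * I * w) ^ (n+1))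
        (c (n+1) * (2 * π * I * (n+1)) * Complex.exp (2 * π * I * z) ^ (n+1)) z := by
    intro n z _
    have h1 : HasDerivAt (fun w : ℂ => Complex.exp (2 * π * I * w))
        (2 * π * I * Complex.exp (2 * π * I * z)) z := by
      have := ((hasDerivAt_id z).const_mul (2 * π * I)).cexp
      simpa [mul_comm] using this
    have h2 := (h1.pow (n+1)).const_mul (c (n+1))
    refine h2.congr_deriv ?_
    have : Complex.exp (2 * π * I * z) ^ (n + 1)
        = Complex.exp (2 * π * I * z) ^ n * Complex.exp (2 * π * I * z) := by ring
    rw [this]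
    push_cast
    ring
  have hbound : ∀ n : ℕ, ∀ z ∈ t,
      ‖c (n+1) * (2 * π * I * (n+1)) * Complex.exp (2 * π * I * z) ^ (n+1)‖
        ≤ (2 * π) * ((((n+1):ℝ) ^ (m + 1) + (n+1)) * ρ ^ (n+1)) := by
    intro n z hzt
    rw [norm_mul, norm_mul, norm_qpow]
    have e1 : ‖(2 * π * I * (n+1) : ℂ)‖ = 2 * π * ((n:ℝ)+1) := by
      have h2 : ((n:ℂ)+1) = ((n+1 : ℕ) : ℂ) := by push_cast; ring
      rw [norm_mul, norm_mul, norm_mul, Complex.norm_I, mul_one, h2, Complex.norm_natCast]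
      have h3 : ‖(2:ℂ)‖ = 2 := by norm_num
      have h4 : ‖((π:ℝ):ℂ)‖ = π := by
        rw [Complex.norm_real, Real.norm_eq_abs, _root_.abs_of_nonneg Real.pi_nonneg]
      rw [h3, h4]
      push_cast
      ring
    rw [e1]
    have hexp : Real.exp (-(2 * π * z.im)) ^ (n+1) ≤ ρ ^ (n+1) := by
      apply pow_le_pow_left₀ (le_of_lt (Real.exp_pos _))
      apply Real.exp_le_exp.2
      have : τ.im / 2 < z.im := hzt
      nlinarith [Real.pi_pos]
    calc ‖c (n+1)‖ * (2 * π * ((n:ℝ)+1)) * Real.exp (-(2 * π * z.im)) ^ (n+1)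
        ≤ (((n+1):ℝ) ^ m + 1) * (2 * π * ((n:ℝ)+1)) * ρ ^ (n+1) := by
          apply mul_le_mul (mul_le_mul ?_ le_rfl (by positivity) (by positivity)) hexp
            (by positivity) (by positivity)
          have := hc (n+1)
          push_cast at this ⊢
          linarith
      _ = (2 * π) * ((((n:ℝ)+1) ^ m * ((n:ℝ)+1) + ((n:ℝ)+1)) * ρ ^ (n+1)) := by ring
      _ ≤ (2 * π) * ((((n+1):ℝ) ^ (m + 1) + (n+1)) * ρ ^ (n+1)) := by
          apply le_of_eq
          push_cast
          ring
  have hu : Summable (fun n : ℕ => (2*π) * ((((n+1):ℝ)^(m+1) + (n+1)) * ρ^(n+1))) := by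
    apply Summable.mul_left
    have h5 := summable_poly_geom (m+1) hρ0 hρ1
    have h6 := summable_poly_geom 1 hρ0 hρ1
    have h7 : Summable (fun n : ℕ => ((n:ℝ)^(m+1) + n) * ρ^n) :=
      (h5.add (by simpa [pow_one] using h6)).congr (fun n => by push_cast; ring)
    have h8 := (summable_nat_add_iff (f := fun n : ℕ => ((n:ℝ)^(m+1) + n) * ρ^n) 1).2 h7
    apply h8.congr
    intro n
    push_cast
    ring
  have hf0 : Summable (fun n : ℕ => c (n+1) * Complex.exp (2*π*I*τ)^(n+1)) :=
    (summable_nat_add_iff (f := fun n : ℕ => c n * Complex.exp (2*π*I*τ)^n) 1).2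
      (summable_coef m hc hτ)
  exact hasDerivAt_tsum_of_isPreconnected hu hopen hconn hderiv hbound hmem hf0 hmem


lemma sigmaC1_bound : ∀ n, ‖sigmaC 1 n‖ ≤ (n:ℝ)^2 + 1 := fun n =>
  le_trans (sigmaC_norm_le 1 n) (by norm_num)
lemma sigmaC3_bound : ∀ n, ‖sigmaC 3 n‖ ≤ (n:ℝ)^4 + 1 := fun n =>
  le_trans (sigmaC_norm_le 3 n) (by norm_num)
lemma sigmaC5_bound : ∀ n, ‖sigmaC 5 n‖ ≤ (n:ℝ)^6 + 1 := fun n =>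
  le_trans (sigmaC_norm_le 5 n) (by norm_num)


theorem bern4 : bernoulli 4 = -1/30 := by
  rw [bernoulli_eq_bernoulli'_of_ne_one (by norm_num)]; exact bernoulli'_four
theorem bern6 : bernoulli 6 = 1/42 := by
  rw [bernoulli_eq_bernoulli'_of_ne_one (by norm_num)]
  have h5 : bernoulli' 5 = 0 := bernoulli'_eq_zero_of_odd (by decide) (by norm_num)
  have c2 : Nat.choose 6 2 = 15 := by decide
  have c4 : Nat.choose 6 4 = 15 := by decide
  rw [bernoulli'_def]
  norm_num [Finset.sum_range_succ, h5, c2, c4]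

lemma Eis4_eq (τ : ℂ) :
    Eis 4 τ = 2 * (2 * π * I) ^ 4 / 6 *
      (1/240 + ∑' n : ℕ, sigmaC 3 (n + 1) * Complex.exp (2 * π * I * τ) ^ (n + 1)) := by
  rw [Eis]
  norm_num [Nat.factorial]
  rw [bern4]
  norm_num

lemma Eis6_eq (τ : ℂ) :
    Eis 6 τ = 2 * (2 * π * I) ^ 6 / 120 *
      (-(1/504) + ∑' n : ℕ, sigmaC 5 (n + 1) * Complex.exp (2 * π * I * τ) ^ (n + 1)) := by
  rw [Eis]
  norm_num [Nat.factorial]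
  rw [bern6]
  norm_num

lemma hasDeriv_Eis4 {τ : ℂ} (hτ : 0 < τ.im) :
    HasDerivAt (Eis 4)
      (2 * (2 * π * I) ^ 4 / 6 *
        ∑' n : ℕ, sigmaC 3 (n+1) * (2 * π * I * (n+1)) * Complex.exp (2 * π * I * τ) ^ (n+1)) τ := by
  have hfun : Eis 4 = fun z => 2 * (2 * π * I) ^ 4 / 6 *
      (1/240 + ∑' n : ℕ, sigmaC 3 (n + 1) * Complex.exp (2 * π * I * z) ^ (n + 1)) :=
    funext fun z => Eis4_eq z
  rw [hfun]
  exact (((hasDerivAt_qseries' 4 sigmaC3_bound hτ).const_add (1/240 : ℂ)).const_mul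
    (2 * (2 * π * I) ^ 4 / 6))


/-- For `τ` in the upper half-plane, `7·E₆(τ) = 2·E₂(τ)·E₄(τ) + πi·δ₄E₄(τ)`. -/
theorem seven_E6 (τ : ℂ) (hτ : 0 < τ.im) :
    7 * Eis 6 τ = 2 * Eis 2 τ * Eis 4 τ + π * I * deltaEis 4 τ := by
  have hs : τ - conj τ ≠ 0 := by
    intro h
    have h2 : (τ - conj τ).im = 2 * τ.im := by
      simp [Complex.sub_im, Complex.conj_im]; ring
    rw [h] at h2
    simp at h2
    linarith
  have hπ : (π : ℂ) ≠ 0 := by exact_mod_cast Real.pi_ne_zero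
  have hI2 : (I : ℂ)^2 = -1 := Complex.I_sq
  have sA : Summable (fun n => cA n * Complex.exp (2*π*I*τ)^n) := summable_coef 2 cA_bound hτ
  have sB : Summable (fun n => cB n * Complex.exp (2*π*I*τ)^n) := summable_coef 4 cB_bound hτ
  have sC : Summable (fun n => cC n * Complex.exp (2*π*I*τ)^n) := summable_coef 6 cC_bound hτ
  have sD : Summable (fun n => cD n * Complex.exp (2*π*I*τ)^n) := summable_coef 5 cD_bound hτ
  have hTA : (∑' n : ℕ, cA n * Complex.exp (2*π*I*τ)^n)
      = -(1/24) + ∑' n : ℕ, sigmaC 1 (n+1) * Complex.exp (2*π*I*τ)^(n+1) := by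
    rw [tsum_shift sA]
    norm_num [cA]
  have hTB : (∑' n : ℕ, cB n * Complex.exp (2*π*I*τ)^n)
      = 1/240 + ∑' n : ℕ, sigmaC 3 (n+1) * Complex.exp (2*π*I*τ)^(n+1) := by
    rw [tsum_shift sB]
    norm_num [cB]
  have hTC : (∑' n : ℕ, cC n * Complex.exp (2*π*I*τ)^n)
      = -(1/504) + ∑' n : ℕ, sigmaC 5 (n+1) * Complex.exp (2*π*I*τ)^(n+1) := by
    rw [tsum_shift sC]
    norm_num [cC]
  have hTD : (∑' n : ℕ, sigmaC 3 (n+1) * (2*π*I*(n+1)) * Complex.exp (2*π*I*τ)^(n+1))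
      = 2*π*I * (∑' n : ℕ, cD n * Complex.exp (2*π*I*τ)^n) := by
    rw [tsum_shift sD]
    have h0 : cD 0 = 0 := by simp [cD]
    rw [h0, zero_add, ← tsum_mul_left]
    exact tsum_congr fun n => by simp only [cD]; push_cast; ring
  have core := core_tsum hτ
  rw [hTA, hTB, hTC] at core
  have hE2 : Eis 2 τ = E2hol τ + 2*(2*π*I)^2 * (-(1/(4*π*I*(τ - conj τ)))) := by
    rw [Eis]
    norm_num
  have hnh : 2*(2*π*I)^2 * (-(1/(4*π*I*(τ - conj τ)))) = -(2*π*I)/(τ - conj τ) := by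
    field_simp
    ring
  have hderiv : deriv (Eis 4) τ = 2 * (2*π*I)^4/6 *
      (2*π*I * ∑' n : ℕ, cD n * Complex.exp (2*π*I*τ)^n) := by
    rw [(hasDeriv_Eis4 hτ).deriv, hTD]
  have hdelta : deltaEis 4 τ = deriv (Eis 4) τ + 4/(τ - conj τ) * Eis 4 τ := by
    rw [deltaEis, dEis]
    norm_num
  rw [Eis6_eq, hE2, E2hol, hnh, Eis4_eq, hdelta, hderiv, Eis4_eq]
  set S1 := ∑' n : ℕ, sigmaC 1 (n+1) * Complex.exp (2*π*I*τ)^(n+1) with hS1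
  set S3 := ∑' n : ℕ, sigmaC 3 (n+1) * Complex.exp (2*π*I*τ)^(n+1) with hS3
  set S5 := ∑' n : ℕ, sigmaC 5 (n+1) * Complex.exp (2*π*I*τ)^(n+1) with hS5
  set W := ∑' n : ℕ, cD n * Complex.exp (2*π*I*τ)^n with hW
  linear_combination (-(2:ℂ)/135*π^6) * core
    + (-(32:ℂ)/3*(π:ℂ)^6*W
        + (π:ℂ)^6*(I^4 - I^2 + 1)*((112/15)*S5 - (16/45)*S1 - (256/3)*S1*S3 + (32/9)*S3)
        + (32:ℂ)/3*(π:ℂ)^6*W*(I^2 - I^4)) * hI2
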